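/- arXiv:1108.5597 — 5 statements merged into one kernel-verified Lean document; each statement's English description precedes it below -/
import Mathlib

section
/- Let G ≤ S_n be a transitive permutation group containing a transposition. Then all transpositions contained in G are conjugate in G. -/
/-- Number of orbits of the cyclic group generated by a permutation. -/
noncomputable def orbCount {α : Type*} [Fintype α] (g : Equiv.Perm α) : ℕ :=
  Nat.card (MulAction.orbitRel.Quotient (Subgroup.zpowers g) α)

/-- The index of a permutation: `ind(g) = n - #orbits(⟨g⟩)`. -/
noncomputable def permInd {α : Type*} [Fintype α] (g : Equiv.Perm α) : ℕ :=
  Fintype.card α - orbCount g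

/-- The index of a permutation group: the minimum of `permInd g` over `1 ≠ g ∈ G`. -/
noncomputable def grpInd {α : Type*} [Fintype α] (G : Subgroup (Equiv.Perm α)) : ℕ :=
  sInf {m | ∃ g ∈ G, g ≠ 1 ∧ permInd g = m}

/-- A subgroup of permutations is transitive. -/
def IsTransitive {α : Type*} (G : Subgroup (Equiv.Perm α)) : Prop :=
  ∀ i j : α, ∃ g ∈ G, g i = j

/-- `B` is a block for the permutation group `G`. -/
def IsBlockOf {α : Type*} (G : Subgroup (Equiv.Perm α)) (B : Set α) : Prop :=
  ∀ g ∈ G, (⇑g '' B = B ∨ Disjoint (⇑g '' B) B)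

/-- `G` is a primitive permutation group. -/
def IsPrimitive {α : Type*} (G : Subgroup (Equiv.Perm α)) : Prop :=
  IsTransitive G ∧ ∀ B : Set α, IsBlockOf G B → B.Subsingleton ∨ B = Set.univ

/-- In a transitive permutation group `G ≤ Sₙ`, all transpositions contained in `G`
are conjugate within `G`. -/
theorem stmt_2 {n : ℕ} (G : Subgroup (Equiv.Perm (Fin n))) (hT : IsTransitive G) :
    ∀ σ τ : Equiv.Perm (Fin n), σ ∈ G → τ ∈ G → σ.IsSwap → τ.IsSwap →
      ∃ g ∈ G, g * σ * g⁻¹ = τ := by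
  rintro σ τ hσG hτG ⟨a, b, hab, rfl⟩ ⟨c, d, hcd, rfl⟩
  obtain ⟨g, hgG, hga⟩ := hT a c
  -- g conjugates swap a b to swap c (g b)
  have h1 : g * Equiv.swap a b * g⁻¹ = Equiv.swap c (g b) := by
    rw [← Equiv.swap_apply_apply, hga]
  have hgb_ne : g b ≠ c := by
    rw [← hga]; exact fun h => hab (g.injective h).symm
  by_cases hbd : g b = d
  · exact ⟨g, hgG, by rw [h1, hbd]⟩
  · have hmem : Equiv.swap c (g b) ∈ G := h1 ▸ mul_mem (mul_mem hgG hσG) (inv_mem hgG)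
    -- swap (g b) d ∈ G since it's (swap c gb)(swap c d)(swap c gb)⁻¹ conj... compute
    have h2 : Equiv.swap c (g b) * Equiv.swap c d * (Equiv.swap c (g b))⁻¹
        = Equiv.swap (g b) d := by
      rw [← Equiv.swap_apply_apply, Equiv.swap_apply_left,
        Equiv.swap_apply_of_ne_of_ne (Ne.symm hcd) (fun h => hbd h.symm)]
    have hmem2 : Equiv.swap (g b) d ∈ G :=
      h2 ▸ mul_mem (mul_mem hmem hτG) (inv_mem hmem)
    refine ⟨Equiv.swap (g b) d * g, mul_mem hmem2 hgG, ?_⟩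
    have h3 : Equiv.swap (g b) d * Equiv.swap c (g b) * (Equiv.swap (g b) d)⁻¹
        = Equiv.swap c d := by
      rw [← Equiv.swap_apply_apply, Equiv.swap_apply_of_ne_of_ne (Ne.symm hgb_ne) hcd,
        Equiv.swap_apply_left]
    have h4 : Equiv.swap (g b) d * g * Equiv.swap a b * (Equiv.swap (g b) d * g)⁻¹
        = Equiv.swap (g b) d * (g * Equiv.swap a b * g⁻¹) * (Equiv.swap (g b) d)⁻¹ := by
      group
    rw [h4, h1, h3]
end

section
/- Let G ≤ S_n be transitive, let τ = (i,j) ∈ G be a transposition, and let B be a minimal block of G of size greater than 1 containing i. Then j ∈ B, and the image of the setwise stabilizer of B in G under restriction to B is the full symmetric group Sym(B). -/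
section Aux

variable {n : ℕ} (G : Subgroup (Equiv.Perm (Fin n)))

/-- If `swap u v ∈ G` and `swap u c ∈ G` then `swap v c ∈ G`. -/
theorem aux_key {u v : Fin n} (huv : Equiv.swap u v ∈ G) :
    ∀ c : Fin n, Equiv.swap u c ∈ G → Equiv.swap v c ∈ G := by
  intro c huc
  rcases eq_or_ne c u with rfl | hcu
  · rwa [Equiv.swap_comm]
  rcases eq_or_ne c v with rfl | hcv
  · rw [Equiv.swap_self]; exact G.one_mem
  · have : Equiv.swap ((Equiv.swap u v) u) ((Equiv.swap u v) c) ∈ G := by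
      rw [Equiv.swap_apply_apply]
      exact G.mul_mem (G.mul_mem huv huc) (G.inv_mem huv)
    rwa [Equiv.swap_apply_left, Equiv.swap_apply_of_ne_of_ne hcu hcv] at this

theorem aux_conj {g : Equiv.Perm (Fin n)} (hg : g ∈ G) {u v : Fin n}
    (h : Equiv.swap u v ∈ G) : Equiv.swap (g u) (g v) ∈ G := by
  rw [Equiv.swap_apply_apply]
  exact G.mul_mem (G.mul_mem hg h) (G.inv_mem hg)

end Aux

/-- Let `G ≤ Sₙ` be transitive, `τ = (i,j) ∈ G` a transposition and `B` a minimal block of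
size `> 1` containing `i`. Then `j ∈ B` and the restriction to `B` of the setwise stabilizer
of `B` in `G` is the full symmetric group on `B`. -/
theorem stmt_4 {n : ℕ} (G : Subgroup (Equiv.Perm (Fin n))) (hT : IsTransitive G)
    (i j : Fin n) (hij : i ≠ j) (hτ : Equiv.swap i j ∈ G)
    (B : Set (Fin n)) (hB : IsBlockOf G B) (hiB : i ∈ B) (hBsize : 1 < B.ncard)
    (hmin : ∀ B' : Set (Fin n), IsBlockOf G B' → i ∈ B' → B' ⊆ B →
      B'.Subsingleton ∨ B' = B) :
    j ∈ B ∧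
    ∀ σ : Equiv.Perm B, ∃ g ∈ G, ⇑g '' B = B ∧ ∀ x : B, g (x : Fin n) = (σ x : Fin n) := by
  classical
  -- Part 1 : j ∈ B
  have hjB : j ∈ B := by
    rcases hB _ hτ with h | h
    · rw [← h]; exact ⟨i, hiB, Equiv.swap_apply_left i j⟩
    · exfalso
      obtain ⟨x, hxB, hxi⟩ := Set.exists_ne_of_one_lt_ncard hBsize i
      rcases eq_or_ne x j with rfl | hxj
      · exact Set.disjoint_left.mp h ⟨x, hxB, Equiv.swap_apply_right i x⟩ hiB
      · exact Set.disjoint_left.mp h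
          ⟨x, hxB, Equiv.swap_apply_of_ne_of_ne hxi hxj⟩ hxB
  -- Part 2 : all swaps `swap i a`, `a ∈ B`, lie in `G`
  set Δ : Set (Fin n) := {a | a ∈ B ∧ Equiv.swap i a ∈ G} with hΔdef
  have hΔsub : Δ ⊆ B := fun a ha => ha.1
  have hiΔ : i ∈ Δ := ⟨hiB, by rw [Equiv.swap_self]; exact G.one_mem⟩
  have hjΔ : j ∈ Δ := ⟨hjB, hτ⟩
  have hΔblock : IsBlockOf G Δ := by
    intro g hg
    rcases hB g hg with hgB | hgB
    · by_cases hd : Disjoint (⇑g '' Δ) Δ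
      · exact Or.inr hd
      · left
        rw [Set.not_disjoint_iff] at hd
        obtain ⟨x, ⟨a, haΔ, rfl⟩, hxΔ⟩ := hd
        -- `swap i (g i) ∈ G`
        have hgi : Equiv.swap i (g i) ∈ G := by
          have h1 : Equiv.swap (g i) (g a) ∈ G := aux_conj G hg haΔ.2
          have h2 : Equiv.swap (g a) i ∈ G := by rw [Equiv.swap_comm]; exact hxΔ.2
          have h3 : Equiv.swap (g a) (g i) ∈ G := by rw [Equiv.swap_comm]; exact h1
          exact aux_key G h2 (g i) h3
        ext b
        constructor
        · rintro ⟨a, haΔ, rfl⟩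
          refine ⟨hgB ▸ ⟨a, haΔ.1, rfl⟩, ?_⟩
          have h1 : Equiv.swap (g i) (g a) ∈ G := aux_conj G hg haΔ.2
          have h2 : Equiv.swap (g i) i ∈ G := by rwa [Equiv.swap_comm]
          exact aux_key G h2 (g a) h1
        · rintro ⟨hbB, hbG⟩
          refine ⟨g⁻¹ b, ⟨?_, ?_⟩, by simp⟩
          · have : b ∈ ⇑g '' B := hgB.symm ▸ hbB
            obtain ⟨c, hcB, rfl⟩ := this
            simpa using hcB
          · have h1 : Equiv.swap (g i) b ∈ G := aux_key G hgi b hbG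
            have h2 : Equiv.swap (g⁻¹ (g i)) (g⁻¹ b) ∈ G := aux_conj G (G.inv_mem hg) h1
            simpa using h2
    · exact Or.inr (Set.disjoint_of_subset (Set.image_mono hΔsub) hΔsub hgB)
  have hΔeq : Δ = B := by
    rcases hmin Δ hΔblock hiΔ hΔsub with hs | he
    · exact absurd (hs hiΔ hjΔ) hij
    · exact he
  have hall : ∀ a ∈ B, Equiv.swap i a ∈ G := fun a ha => (hΔeq ▸ ha : a ∈ Δ).2
  have hswapG : ∀ a b : Fin n, a ∈ B → b ∈ B → Equiv.swap a b ∈ G :=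
    fun a b ha hb => aux_key G (hall a ha) b (hall b hb)
  -- swaps of elements of `B` preserve `B`
  have himg : ∀ a b : Fin n, a ∈ B → b ∈ B → ⇑(Equiv.swap a b) '' B = B := by
    intro a b ha hb
    have hmap : ∀ x ∈ B, Equiv.swap a b x ∈ B := by
      intro x hx
      rcases eq_or_ne x a with rfl | hxa
      · simpa using hb
      rcases eq_or_ne x b with rfl | hxb
      · simpa using ha
      · rwa [Equiv.swap_apply_of_ne_of_ne hxa hxb]
    apply Set.Subset.antisymm
    · rintro _ ⟨x, hx, rfl⟩; exact hmap x hx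
    · intro x hx; exact ⟨Equiv.swap a b x, hmap x hx, by simp⟩
  -- swaps of subtype elements commute with the coercion
  have hsw : ∀ x y z : B, Equiv.swap (x : Fin n) (y : Fin n) (z : Fin n)
      = ((Equiv.swap x y z : B) : Fin n) := by
    intro x y z
    rcases eq_or_ne z x with rfl | hzx
    · simp
    rcases eq_or_ne z y with rfl | hzy
    · simp
    · rw [Equiv.swap_apply_of_ne_of_ne (Subtype.coe_ne_coe.mpr hzx)
        (Subtype.coe_ne_coe.mpr hzy),
        Equiv.swap_apply_of_ne_of_ne hzx hzy]
  refine ⟨hjB, ?_⟩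
  intro σ
  refine Equiv.Perm.swap_induction_on σ ⟨1, G.one_mem, by simp, fun x => rfl⟩ ?_
  intro f x y hxy ih
  · obtain ⟨g, hgG, hgB, hgf⟩ := ih
    refine ⟨Equiv.swap (x : Fin n) (y : Fin n) * g,
      G.mul_mem (hswapG _ _ x.2 y.2) hgG, ?_, ?_⟩
    · rw [Equiv.Perm.coe_mul, Set.image_comp, hgB, himg _ _ x.2 y.2]
    · intro z
      have : (Equiv.swap (x : Fin n) (y : Fin n) * g) (z : Fin n)
          = Equiv.swap (x : Fin n) (y : Fin n) ((f z : B) : Fin n) := by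
        simp [Equiv.Perm.mul_apply, hgf z]
      rw [this, hsw x y (f z)]
      rfl
end

section
/- Let H₁ ≤ S_e and H₂ ≤ S_d be transitive, G = H₁ ≀ H₂ ≤ S_{ed}. If g = ((h_{1,1},…,h_{1,d}), h₂) ∈ G with h₂ ≠ 1, then the number of orbits of ⟨g⟩ on {1,…,e}×{1,…,d} is at most (d−1)e, i.e., ind(g) ≥ e. -/
/-- The element of the imprimitive wreath product acting on `Fin d × Fin e` given by
`(i, x) ↦ (h i, f i x)`: the blocks `{i} × Fin e` are permuted by `h` and the `i`-th
base coordinate `f i` acts inside the block. -/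
def wrElem {e d : ℕ} (h : Equiv.Perm (Fin d)) (f : Fin d → Equiv.Perm (Fin e)) :
    Equiv.Perm (Fin d × Fin e) := Equiv.prodShear h f

lemma wrElem_mul {e d : ℕ} (h h' : Equiv.Perm (Fin d)) (f f' : Fin d → Equiv.Perm (Fin e)) :
    wrElem h f * wrElem h' f' = wrElem (h * h') (fun i => f (h' i) * f' i) := by
  ext p <;> simp [wrElem, Equiv.prodShear, Equiv.Perm.mul_apply]

lemma wrElem_one {e d : ℕ} :
    (wrElem (1 : Equiv.Perm (Fin d)) (fun _ => (1 : Equiv.Perm (Fin e)))) = 1 := by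
  ext p <;> simp [wrElem, Equiv.prodShear]

/-- The imprimitive wreath product `H₁ ≀ H₂ = H₁^d ⋊ H₂` as a subgroup of the
permutations of `Fin d × Fin e`. -/
def wreath {e d : ℕ} (H₁ : Subgroup (Equiv.Perm (Fin e))) (H₂ : Subgroup (Equiv.Perm (Fin d))) :
    Subgroup (Equiv.Perm (Fin d × Fin e)) where
  carrier := {g | ∃ h f, h ∈ H₂ ∧ (∀ i, f i ∈ H₁) ∧ g = wrElem h f}
  one_mem' := ⟨1, fun _ => 1, H₂.one_mem, fun _ => H₁.one_mem, wrElem_one.symm⟩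
  mul_mem' := by
    rintro a b ⟨h, f, hh, hf, rfl⟩ ⟨h', f', hh', hf', rfl⟩
    exact ⟨h * h', fun i => f (h' i) * f' i, H₂.mul_mem hh hh',
      fun i => H₁.mul_mem (hf _) (hf' _), wrElem_mul h h' f f'⟩
  inv_mem' := by
    rintro a ⟨h, f, hh, hf, rfl⟩
    refine ⟨h⁻¹, fun j => (f (h⁻¹ j))⁻¹, H₂.inv_mem hh, fun j => H₁.inv_mem (hf _), ?_⟩
    apply inv_eq_of_mul_eq_one_right
    rw [wrElem_mul]
    simp only [mul_inv_cancel]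
    exact wrElem_one

lemma wrElem_fst {e d : ℕ} (h : Equiv.Perm (Fin d)) (f : Fin d → Equiv.Perm (Fin e))
    (p : Fin d × Fin e) : ((wrElem h f) p).1 = h p.1 := rfl

lemma wrElem_pow_fst {e d : ℕ} (h : Equiv.Perm (Fin d)) (f : Fin d → Equiv.Perm (Fin e))
    (n : ℕ) (p : Fin d × Fin e) : ((wrElem h f ^ n) p).1 = (h ^ n) p.1 := by
  induction n with
  | zero => simp
  | succ k ih =>
    rw [pow_succ', pow_succ', Equiv.Perm.mul_apply, Equiv.Perm.mul_apply, wrElem_fst, ih]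

lemma wrElem_zpow_fst {e d : ℕ} (h : Equiv.Perm (Fin d)) (f : Fin d → Equiv.Perm (Fin e))
    (n : ℤ) (p : Fin d × Fin e) : ((wrElem h f ^ n) p).1 = (h ^ n) p.1 := by
  obtain ⟨m, rfl | rfl⟩ := n.eq_nat_or_neg
  · rw [zpow_natCast, zpow_natCast, wrElem_pow_fst]
  · apply (h ^ (m : ℤ)).injective
    have h2 : (wrElem h f ^ (m : ℤ)) ((wrElem h f ^ (-(m : ℤ))) p) = p := by
      rw [← Equiv.Perm.mul_apply, ← zpow_add]; simp
    have h3 : (h ^ (m : ℤ)) ((h ^ (-(m : ℤ))) p.1) = p.1 := by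
      rw [← Equiv.Perm.mul_apply, ← zpow_add]; simp
    have h4 : (h ^ (m : ℤ)) ((wrElem h f ^ (-(m : ℤ))) p).1 = p.1 := by
      calc (h ^ (m : ℤ)) ((wrElem h f ^ (-(m : ℤ))) p).1
          = (h ^ m) ((wrElem h f ^ (-(m : ℤ))) p).1 := by rw [zpow_natCast]
        _ = ((wrElem h f ^ m) ((wrElem h f ^ (-(m : ℤ))) p)).1 :=
            (wrElem_pow_fst h f m _).symm
        _ = ((wrElem h f ^ (m : ℤ)) ((wrElem h f ^ (-(m : ℤ))) p)).1 := by
            rw [zpow_natCast]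
        _ = p.1 := by rw [h2]
    exact h4.trans h3.symm

/-- If `g = ((h_{1,1},…,h_{1,d}), h₂) ∈ H₁ ≀ H₂` has nontrivial top component `h₂ ≠ 1`,
then `⟨g⟩` has at most `(d-1)e` orbits on the `ed` points, i.e. `ind(g) ≥ e`. -/
theorem stmt_6 {e d : ℕ} (H₁ : Subgroup (Equiv.Perm (Fin e)))
    (H₂ : Subgroup (Equiv.Perm (Fin d)))
    (h1 : IsTransitive H₁) (h2 : IsTransitive H₂)
    (h₂ : Equiv.Perm (Fin d)) (f : Fin d → Equiv.Perm (Fin e))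
    (hmem : h₂ ∈ H₂) (hf : ∀ i, f i ∈ H₁) (hne : h₂ ≠ 1) :
    orbCount (wrElem h₂ f) ≤ (d - 1) * e ∧ e ≤ permInd (wrElem h₂ f) := by
  classical
  set g := wrElem h₂ f with hg
  -- the orbit relation of g refines (via fst) that of h₂
  have key : ∀ p q : Fin d × Fin e,
      (MulAction.orbitRel (Subgroup.zpowers g) (Fin d × Fin e)) p q →
      (MulAction.orbitRel (Subgroup.zpowers h₂) (Fin d)) p.1 q.1 := by
    intro p q hpq
    rw [MulAction.orbitRel_apply, MulAction.mem_orbit_iff] at hpq ⊢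
    obtain ⟨⟨γ, hγ⟩, hact⟩ := hpq
    obtain ⟨n, rfl⟩ := Subgroup.mem_zpowers_iff.mp hγ
    refine ⟨⟨h₂ ^ n, Subgroup.zpow_mem _ (Subgroup.mem_zpowers h₂) n⟩, ?_⟩
    have : (g ^ n) q = p := hact
    have := congrArg Prod.fst this
    rw [wrElem_zpow_fst] at this
    exact this
  let F1 : MulAction.orbitRel.Quotient (Subgroup.zpowers g) (Fin d × Fin e) →
      MulAction.orbitRel.Quotient (Subgroup.zpowers h₂) (Fin d) :=
    Quotient.map' Prod.fst key
  have hx : ∀ q : MulAction.orbitRel.Quotient (Subgroup.zpowers g) (Fin d × Fin e),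
      ∃ x : Fin e, (Quotient.mk'' ((F1 q).out, x) : MulAction.orbitRel.Quotient
        (Subgroup.zpowers g) (Fin d × Fin e)) = q := by
    intro q
    induction q using Quotient.inductionOn' with
    | h p =>
      have hout : (MulAction.orbitRel (Subgroup.zpowers h₂) (Fin d))
          (F1 (Quotient.mk'' p)).out p.1 := by
        apply Quotient.exact'
        show _ = Quotient.mk'' p.1
        exact (F1 (Quotient.mk'' p)).out_eq'
      rw [MulAction.orbitRel_apply, MulAction.mem_orbit_iff] at hout
      obtain ⟨⟨γ, hγ⟩, hact⟩ := hout
      obtain ⟨n, rfl⟩ := Subgroup.mem_zpowers_iff.mp hγ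
      have hact' : (h₂ ^ n) p.1 = (F1 (Quotient.mk'' p)).out := hact
      refine ⟨((g ^ n) p).2, ?_⟩
      have heq : ((F1 (Quotient.mk'' p)).out, ((g ^ n) p).2) = (g ^ n) p := by
        rw [← hact']
        exact Prod.ext (wrElem_zpow_fst h₂ f n p).symm rfl
      rw [heq]
      apply Quotient.sound'
      rw [MulAction.orbitRel_apply, MulAction.mem_orbit_iff]
      exact ⟨⟨g ^ n, Subgroup.zpow_mem _ (Subgroup.mem_zpowers g) n⟩, rfl⟩
  -- the injection
  let F : MulAction.orbitRel.Quotient (Subgroup.zpowers g) (Fin d × Fin e) →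
      MulAction.orbitRel.Quotient (Subgroup.zpowers h₂) (Fin d) × Fin e :=
    fun q => (F1 q, (hx q).choose)
  have hFinj : Function.Injective F := by
    have spec : ∀ q, (Quotient.mk'' ((F q).1.out, (F q).2) : MulAction.orbitRel.Quotient
        (Subgroup.zpowers g) (Fin d × Fin e)) = q := fun q => (hx q).choose_spec
    intro a b hab
    rw [← spec a, ← spec b, hab]
  have hcard1 : orbCount g ≤ Nat.card (MulAction.orbitRel.Quotient
      (Subgroup.zpowers h₂) (Fin d)) * e := by
    calc orbCount g ≤ Nat.card (MulAction.orbitRel.Quotient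
        (Subgroup.zpowers h₂) (Fin d) × Fin e) := Nat.card_le_card_of_injective F hFinj
      _ = _ := by simp [Nat.card_prod]
  -- the number of h₂-orbits is at most d - 1
  have hQh : Nat.card (MulAction.orbitRel.Quotient (Subgroup.zpowers h₂) (Fin d)) ≤ d - 1 := by
    obtain ⟨i, hi⟩ : ∃ i, h₂ i ≠ i := by
      by_contra hc
      push_neg at hc
      exact hne (Equiv.ext hc)
    letI : Fintype (MulAction.orbitRel.Quotient (Subgroup.zpowers h₂) (Fin d)) :=
      Fintype.ofFinite _
    have hsurj : Function.Surjective (Quotient.mk'' :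
        Fin d → MulAction.orbitRel.Quotient (Subgroup.zpowers h₂) (Fin d)) :=
      fun q => Quotient.inductionOn' q fun a => ⟨a, rfl⟩
    have hninj : ¬ Function.Injective (Quotient.mk'' :
        Fin d → MulAction.orbitRel.Quotient (Subgroup.zpowers h₂) (Fin d)) := by
      intro hinj
      apply hi
      apply hinj
      apply Quotient.sound'
      rw [MulAction.orbitRel_apply, MulAction.mem_orbit_iff]
      exact ⟨⟨h₂, Subgroup.mem_zpowers h₂⟩, rfl⟩
    have hlt : Fintype.card (MulAction.orbitRel.Quotient (Subgroup.zpowers h₂) (Fin d)) < d := by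
      have := Fintype.card_lt_of_surjective_not_injective _ hsurj hninj
      rwa [Fintype.card_fin] at this
    calc Nat.card (MulAction.orbitRel.Quotient (Subgroup.zpowers h₂) (Fin d))
        = Fintype.card (MulAction.orbitRel.Quotient (Subgroup.zpowers h₂) (Fin d)) :=
          Nat.card_eq_fintype_card
      _ ≤ d - 1 := by omega
  have hmain : orbCount g ≤ (d - 1) * e :=
    hcard1.trans (Nat.mul_le_mul_right e hQh)
  refine ⟨hmain, ?_⟩
  have hd : 1 ≤ d := by
    rcases Nat.eq_zero_or_pos d with hd0 | hd0
    · subst hd0; exact absurd (Equiv.ext fun x => x.elim0) hne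
    · exact hd0
  have hsum : (d - 1) * e + e = d * e := by
    obtain ⟨k, rfl⟩ := Nat.exists_eq_succ_of_ne_zero (by omega : d ≠ 0)
    simp [Nat.succ_sub_one, Nat.succ_mul]
  have hcardα : Fintype.card (Fin d × Fin e) = d * e := by
    rw [Fintype.card_prod, Fintype.card_fin, Fintype.card_fin]
  unfold permInd
  rw [hcardα]
  have := Nat.sub_le_sub_left hmain (d * e)
  omega
end

section
/- Let G = H₁ ≀ H₂ ≤ S_{ed} with H₁ ≤ S_e, H₂ ≤ S_d transitive, and let h, h̃ ∈ H₁. Then h and h̃ are conjugate in H₁ if and only if the elements ((h,1,…,1),1) and ((h̃,1,…,1),1) are conjugate in G. -/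
lemma wrElem_apply {e d : ℕ} (h : Equiv.Perm (Fin d)) (f : Fin d → Equiv.Perm (Fin e))
    (i : Fin d) (x : Fin e) : wrElem h f (i, x) = (h i, f i x) := rfl

/-- Elements `h, h̃ ∈ H₁` are conjugate in `H₁` if and only if the wreath product elements
`((h,1,…,1),1)` and `((h̃,1,…,1),1)` are conjugate in `G = H₁ ≀ H₂`. -/
theorem stmt_7 {e d : ℕ} (hd : 0 < d) (H₁ : Subgroup (Equiv.Perm (Fin e)))
    (H₂ : Subgroup (Equiv.Perm (Fin d)))
    (h1 : IsTransitive H₁) (h2 : IsTransitive H₂)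
    (h h' : Equiv.Perm (Fin e)) (hh : h ∈ H₁) (hh' : h' ∈ H₁) :
    (∃ c ∈ H₁, c * h * c⁻¹ = h') ↔
    (∃ g ∈ wreath H₁ H₂,
      g * wrElem 1 (Function.update (fun _ => 1) (⟨0, hd⟩ : Fin d) h) * g⁻¹ =
        wrElem 1 (Function.update (fun _ => 1) (⟨0, hd⟩ : Fin d) h')) := by
  set i0 : Fin d := ⟨0, hd⟩ with hi0
  constructor
  · rintro ⟨c, hc, hch⟩
    refine ⟨wrElem 1 (Function.update (fun _ => 1) i0 c),
      ⟨1, _, H₂.one_mem, fun i => ?_, rfl⟩, ?_⟩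
    · rcases eq_or_ne i i0 with rfl | hi
      · simpa using hc
      · rw [Function.update_of_ne hi]; exact H₁.one_mem
    · rw [mul_inv_eq_iff_eq_mul, wrElem_mul, wrElem_mul]
      ext ⟨i, x⟩ : 1
      rcases eq_or_ne i i0 with rfl | hi
      · simp [wrElem_apply, ← hch]
      · simp [wrElem_apply, Function.update_of_ne hi]
  · rintro ⟨g, ⟨σ, f, hσ, hf, rfl⟩, hg⟩
    rw [mul_inv_eq_iff_eq_mul, wrElem_mul, wrElem_mul] at hg
    have key : ∀ i : Fin d,
        f i * Function.update (fun _ => (1 : Equiv.Perm (Fin e))) i0 h i =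
        Function.update (fun _ => (1 : Equiv.Perm (Fin e))) i0 h' (σ i) * f i := by
      intro i
      ext x : 1
      have := congrArg (fun (p : Equiv.Perm (Fin d × Fin e)) => (p (i, x)).2) hg
      simpa [wrElem_apply] using this
    rcases eq_or_ne (σ i0) i0 with hσ0 | hσ0
    · refine ⟨f i0, hf i0, ?_⟩
      have hk := key i0
      rw [hσ0, Function.update_self, Function.update_self] at hk
      rw [hk]
      group
    · have hone : h = 1 := by
        have hk := key i0
        rw [Function.update_self, Function.update_of_ne hσ0] at hk
        simpa using mul_left_cancel (a := f i0) (by simpa using hk)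
      have hone' : h' = 1 := by
        have hne : σ⁻¹ i0 ≠ i0 := by
          intro H
          exact hσ0 ((congrArg σ H).symm.trans (show σ (σ⁻¹ i0) = i0 from Equiv.apply_symm_apply σ i0))
        have hk := key (σ⁻¹ i0)
        rw [Function.update_of_ne hne, show σ (σ⁻¹ i0) = i0 from Equiv.apply_symm_apply σ i0, Function.update_self] at hk
        simpa using (mul_right_cancel (b := f (σ⁻¹ i0)) (by simpa using hk)).symm
      exact ⟨1, H₁.one_mem, by simp [hone, hone']⟩
end

section
/- Suppose the Dirichlet series ∑_{K ∈ 𝒦} c_K N_K^{-s} with c_K ≥ 0, N_K ≥ 1 converges for all Re(s) > 1 (equivalently ∑_{N_K ≤ x} c_K = O_ε(x^{1+ε}) for all ε > 0). Suppose further that for each K the error terms g_K(s) satisfy |g_K(s)| ≤ C(ε)·(D_K |1+s|^m)^{(1−σ)/2+ε}·D_K^{1/2} for σ = Re(s) > 1/2, where D_K ≤ c·N_K for a fixed constant c. Then the series ∑_K g_K(s)/N_K^{2s} converges absolutely and locally uniformly on Re(s) > 7/8, defining an analytic function there. -/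
open Complex

/-- Key analytic continuation step: if the Dirichlet series `∑ c_K N_K^{-s}` (with
`c_K ≥ 0`, `N_K ≥ 1`) converges for all real `s > 1`, and the error terms `g_K`, analytic
on `Re(s) > 1/2`, satisfy `‖g_K(s)‖ ≤ C(ε) (D_K ‖1+s‖^m)^{(1-Re s)/2 + ε} D_K^{1/2}` there,
with `D_K ≤ c₀ N_K`, then `∑ c_K g_K(s) / N_K^{2s}` converges absolutely and locally
uniformly on `Re(s) > 7/8` and defines an analytic function there. -/
theorem stmt_16 {𝒦 : Type*} (c N D : 𝒦 → ℝ) (g : 𝒦 → ℂ → ℂ) (m : ℕ) (c₀ : ℝ)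
    (hc : ∀ K, 0 ≤ c K) (hN : ∀ K, 1 ≤ N K) (hD : ∀ K, 1 ≤ D K)
    (hDN : ∀ K, D K ≤ c₀ * N K)
    (hconv : ∀ s : ℝ, 1 < s → Summable fun K => c K / N K ^ s)
    (hganal : ∀ K, DifferentiableOn ℂ (g K) {s : ℂ | 1 / 2 < s.re})
    (hbound : ∀ ε : ℝ, 0 < ε → ∃ C : ℝ, 0 < C ∧ ∀ K, ∀ s : ℂ, 1 / 2 < s.re →
      ‖g K s‖ ≤ C * (D K * ‖1 + s‖ ^ m) ^ ((1 - s.re) / 2 + ε) * D K ^ ((1 : ℝ) / 2)) :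
    (∀ s : ℂ, 7 / 8 < s.re →
      Summable fun K => ‖(c K : ℂ) * g K s / (N K : ℂ) ^ (2 * s)‖) ∧
    DifferentiableOn ℂ (fun s : ℂ => ∑' K, (c K : ℂ) * g K s / (N K : ℂ) ^ (2 * s))
      {s : ℂ | 7 / 8 < s.re} ∧
    TendstoLocallyUniformlyOn
      (fun (t : Finset 𝒦) (s : ℂ) => ∑ K ∈ t, (c K : ℂ) * g K s / (N K : ℂ) ^ (2 * s))
      (fun s : ℂ => ∑' K, (c K : ℂ) * g K s / (N K : ℂ) ^ (2 * s))
      Filter.atTop {s : ℂ | 7 / 8 < s.re} := by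
  have hU : IsOpen {s : ℂ | 7 / 8 < s.re} :=
    isOpen_lt continuous_const Complex.continuous_re
  have hsub : {s : ℂ | 7 / 8 < s.re} ⊆ {s : ℂ | 1 / 2 < s.re} := by
    intro s hs
    simp only [Set.mem_setOf_eq] at *
    linarith
  obtain ⟨C, hC, hCb⟩ := hbound (1 / 16) (by norm_num)
  set c₁ : ℝ := max c₀ 1 with hc₁def
  have hc₁ : (1 : ℝ) ≤ c₁ := le_max_right _ _
  have hDN' : ∀ K, D K ≤ c₁ * N K := by
    intro K
    refine (hDN K).trans ?_
    have h1 : (0 : ℝ) < N K := lt_of_lt_of_le one_pos (hN K)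
    have := le_max_left c₀ 1
    nlinarith
  -- key local uniform bound
  have key : ∀ s₀ : ℂ, 7 / 8 < s₀.re → ∃ r : ℝ, 0 < r ∧
      Metric.closedBall s₀ r ⊆ {s : ℂ | 7 / 8 < s.re} ∧
      ∃ u : 𝒦 → ℝ, Summable u ∧ ∀ K, ∀ s ∈ Metric.closedBall s₀ r,
        ‖(c K : ℂ) * g K s / (N K : ℂ) ^ (2 * s)‖ ≤ u K := by
    intro s₀ hs₀
    set r : ℝ := (s₀.re - 7 / 8) / 2 with hrdef
    have hr : 0 < r := by simp only [hrdef]; linarith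
    set σ : ℝ := s₀.re - r with hσdef
    have hσ : 7 / 8 < σ := by simp only [hσdef, hrdef]; linarith
    set B : ℝ := ‖1 + s₀‖ + r with hBdef
    have hB : 1 ≤ B := by
      have h1 : (1 + s₀).re ≤ ‖1 + s₀‖ := Complex.re_le_norm (1 + s₀)
      have h2 : (1 + s₀).re = 1 + s₀.re := by simp
      simp only [hBdef]
      linarith
    set e : ℝ := max ((1 - σ) / 2 + 1 / 16) 0 with hedef
    have he0 : 0 ≤ e := le_max_right _ _
    have he1 : (1 - σ) / 2 + 1 / 16 ≤ e := le_max_left _ _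
    set p : ℝ := 2 * σ - 1 / 2 - e with hpdef
    have hp : 1 < p := by
      rcases max_cases ((1 - σ) / 2 + 1 / 16) (0 : ℝ) with ⟨h1, h2⟩ | ⟨h1, h2⟩ <;>
        simp only [hpdef, hedef, h1] <;> linarith
    have hre : ∀ s ∈ Metric.closedBall s₀ r, σ ≤ s.re := by
      intro s hs
      have h1 : ‖s - s₀‖ ≤ r := by
        rwa [Metric.mem_closedBall, dist_eq_norm] at hs
      have h2 : |(s - s₀).re| ≤ ‖s - s₀‖ := Complex.abs_re_le_norm (s - s₀)
      have h3 : (s - s₀).re = s.re - s₀.re := by simp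
      rw [h3] at h2
      have := abs_le.mp (h2.trans h1)
      simp only [hσdef]
      linarith [this.1]
    have hball : Metric.closedBall s₀ r ⊆ {s : ℂ | 7 / 8 < s.re} := by
      intro s hs
      have := hre s hs
      simp only [Set.mem_setOf_eq]
      linarith
    refine ⟨r, hr, hball, fun K => C * (B ^ m) ^ e * c₁ ^ (e + 1 / 2) * (c K / N K ^ p),
      Summable.mul_left _ (hconv p hp), ?_⟩
    intro K s hs
    have hsre : 7 / 8 < s.re := hball hs
    have hNpos : (0 : ℝ) < N K := lt_of_lt_of_le one_pos (hN K)
    have hDpos : (0 : ℝ) < D K := lt_of_lt_of_le one_pos (hD K)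
    -- norm of the term
    have hnorm : ‖(c K : ℂ) * g K s / (N K : ℂ) ^ (2 * s)‖
        = c K * ‖g K s‖ / N K ^ (2 * s.re) := by
      rw [norm_div, norm_mul, Complex.norm_cpow_eq_rpow_re_of_pos hNpos, Complex.norm_real,
        Real.norm_of_nonneg (hc K)]
      norm_num [Complex.mul_re]
    rw [hnorm]
    -- bound 1: ‖1+s‖ ≤ B, 1 ≤ ‖1+s‖
    have hBs : ‖1 + s‖ ≤ B := by
      have : (1 : ℂ) + s = (1 + s₀) + (s - s₀) := by ring
      rw [this]
      have h1 : ‖s - s₀‖ ≤ r := by rwa [Metric.mem_closedBall, dist_eq_norm] at hs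
      calc ‖(1 + s₀) + (s - s₀)‖ ≤ ‖1 + s₀‖ + ‖s - s₀‖ := norm_add_le _ _
        _ ≤ B := by simp only [hBdef]; linarith
    have h1s : 1 ≤ ‖1 + s‖ := by
      have h1 : (1 + s).re ≤ ‖1 + s‖ := Complex.re_le_norm (1 + s)
      have h2 : (1 + s).re = 1 + s.re := by simp
      linarith
    have hX1 : (1 : ℝ) ≤ D K * ‖1 + s‖ ^ m := by
      have : (1 : ℝ) ≤ ‖1 + s‖ ^ m := one_le_pow₀ h1s
      nlinarith [hD K]
    -- bound on g
    have hg1 : ‖g K s‖ ≤ C * (D K * ‖1 + s‖ ^ m) ^ ((1 - s.re) / 2 + 1 / 16)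
        * D K ^ ((1 : ℝ) / 2) := hCb K s (hsub (hball hs))
    have hg2 : (D K * ‖1 + s‖ ^ m) ^ ((1 - s.re) / 2 + 1 / 16)
        ≤ (D K * ‖1 + s‖ ^ m) ^ e := by
      apply Real.rpow_le_rpow_of_exponent_le hX1
      have := hre s hs
      exact le_trans (by linarith) he1
    have hg3 : (D K * ‖1 + s‖ ^ m) ^ e ≤ (D K) ^ e * (B ^ m) ^ e := by
      rw [Real.mul_rpow hDpos.le (pow_nonneg (norm_nonneg _) m)]
      refine mul_le_mul_of_nonneg_left ?_ (Real.rpow_nonneg hDpos.le e)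
      exact Real.rpow_le_rpow (pow_nonneg (norm_nonneg _) m)
        (pow_le_pow_left₀ (norm_nonneg _) hBs m) he0
    have hg4 : (D K) ^ e * D K ^ ((1 : ℝ) / 2) = D K ^ (e + 1 / 2) := by
      rw [← Real.rpow_add hDpos]
    have hg5 : D K ^ (e + 1 / 2) ≤ c₁ ^ (e + 1 / 2) * N K ^ (e + 1 / 2) := by
      rw [← Real.mul_rpow (by linarith) hNpos.le]
      exact Real.rpow_le_rpow hDpos.le (hDN' K) (by positivity)
    -- combine
    have hgfull : ‖g K s‖ ≤ C * (B ^ m) ^ e * c₁ ^ (e + 1 / 2) * N K ^ (e + 1 / 2) := by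
      calc ‖g K s‖ ≤ C * (D K * ‖1 + s‖ ^ m) ^ ((1 - s.re) / 2 + 1 / 16)
          * D K ^ ((1 : ℝ) / 2) := hg1
        _ ≤ C * ((D K) ^ e * (B ^ m) ^ e) * D K ^ ((1 : ℝ) / 2) := by
            have hD2 : (0:ℝ) ≤ D K ^ ((1:ℝ)/2) := Real.rpow_nonneg hDpos.le _
            exact mul_le_mul_of_nonneg_right
              (mul_le_mul_of_nonneg_left (hg2.trans hg3) hC.le) hD2
        _ = C * (B ^ m) ^ e * ((D K) ^ e * D K ^ ((1 : ℝ) / 2)) := by ring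
        _ = C * (B ^ m) ^ e * D K ^ (e + 1 / 2) := by rw [hg4]
        _ ≤ C * (B ^ m) ^ e * (c₁ ^ (e + 1 / 2) * N K ^ (e + 1 / 2)) := by
            have h0 : (0:ℝ) ≤ C * (B ^ m) ^ e := by positivity
            exact mul_le_mul_of_nonneg_left hg5 h0
        _ = C * (B ^ m) ^ e * c₁ ^ (e + 1 / 2) * N K ^ (e + 1 / 2) := by ring
    -- exponent manipulation
    have hexp : N K ^ (e + 1 / 2 : ℝ) / N K ^ (2 * s.re) ≤ (N K ^ p)⁻¹ := by
      rw [← Real.rpow_neg hNpos.le, div_eq_mul_inv, ← Real.rpow_neg hNpos.le,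
        ← Real.rpow_add hNpos]
      apply Real.rpow_le_rpow_of_exponent_le (hN K)
      have := hre s hs
      simp only [hpdef]
      linarith
    have hNe : (0 : ℝ) < N K ^ (2 * s.re) := Real.rpow_pos_of_pos hNpos _
    calc c K * ‖g K s‖ / N K ^ (2 * s.re)
        ≤ c K * (C * (B ^ m) ^ e * c₁ ^ (e + 1 / 2) * N K ^ (e + 1 / 2))
          / N K ^ (2 * s.re) :=
          (div_le_div_iff_of_pos_right hNe).mpr (mul_le_mul_of_nonneg_left hgfull (hc K))
      _ = C * (B ^ m) ^ e * c₁ ^ (e + 1 / 2)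
          * (c K * (N K ^ (e + 1 / 2 : ℝ) / N K ^ (2 * s.re))) := by ring
      _ ≤ C * (B ^ m) ^ e * c₁ ^ (e + 1 / 2) * (c K / N K ^ p) := by
          have h0 : (0:ℝ) ≤ C * (B ^ m) ^ e * c₁ ^ (e + 1 / 2) := by positivity
          have h1 : c K * (N K ^ (e + 1 / 2 : ℝ) / N K ^ (2 * s.re)) ≤ c K / N K ^ p := by
            rw [div_eq_mul_inv (c K)]
            exact mul_le_mul_of_nonneg_left hexp (hc K)
          exact mul_le_mul_of_nonneg_left h1 h0
  -- summability of norms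
  have hsummable : ∀ s : ℂ, 7 / 8 < s.re →
      Summable fun K => ‖(c K : ℂ) * g K s / (N K : ℂ) ^ (2 * s)‖ := by
    intro s hs
    obtain ⟨r, hr, hball, u, hu, hb⟩ := key s hs
    exact Summable.of_nonneg_of_le (fun K => norm_nonneg _)
      (fun K => hb K s (Metric.mem_closedBall_self hr.le)) hu
  -- locally uniform convergence
  have hTLU : TendstoLocallyUniformlyOn
      (fun (t : Finset 𝒦) (s : ℂ) => ∑ K ∈ t, (c K : ℂ) * g K s / (N K : ℂ) ^ (2 * s))
      (fun s : ℂ => ∑' K, (c K : ℂ) * g K s / (N K : ℂ) ^ (2 * s))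
      Filter.atTop {s : ℂ | 7 / 8 < s.re} := by
    intro v hv x hx
    obtain ⟨r, hr, hball, u, hu, hb⟩ := key x hx
    refine ⟨Metric.closedBall x r, ?_, ?_⟩
    · exact mem_nhdsWithin_of_mem_nhds (Metric.closedBall_mem_nhds x hr)
    · exact tendstoUniformlyOn_tsum hu (fun K s hs => hb K s hs) v hv
  refine ⟨hsummable, ?_, hTLU⟩
  -- differentiability
  apply hTLU.differentiableOn ?_ hU
  apply Filter.Eventually.of_forall
  intro t
  apply DifferentiableOn.fun_sum
  intro K _
  apply DifferentiableOn.div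
  · exact (differentiableOn_const _).mul ((hganal K).mono hsub)
  · apply Differentiable.differentiableOn
    exact Differentiable.const_cpow (differentiable_id.const_mul 2)
      (Or.inl (by exact_mod_cast ne_of_gt (lt_of_lt_of_le one_pos (hN K))))
  · intro s _
    rw [Ne, Complex.cpow_eq_zero_iff]
    push_neg
    intro h
    exact absurd h (by exact_mod_cast ne_of_gt (lt_of_lt_of_le one_pos (hN K)))
end
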